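/- Let A ⊆ B with B a finite A-algebra. Then A ∩ B^× = A^× (an element of A invertible in B is invertible in A) and A ∩ J(B) = J(A), where J denotes the Jacobson radical. -/

import Mathlib

open Polynomial

lemma inv_mem_of_finite {B : Type*} [CommRing B] (A : Subring B)
    [Module.Finite A B] (a : A) (b : B) (hab : (a : B) * b = 1) : b ∈ A := by
  have : Algebra.IsIntegral A B := Algebra.IsIntegral.of_finite A B
  obtain ⟨p, hmonic, hp⟩ := Algebra.IsIntegral.isIntegral (R := A) b
  set n := p.natDegree with hn
  rcases Nat.eq_zero_or_pos n with h0 | hpos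
  · have h1 : p = 1 := hmonic.natDegree_eq_zero.mp h0
    rw [h1] at hp
    simp at hp
    have hb : b = 0 := by
      calc b = b * 1 := (mul_one b).symm
        _ = b * 0 := by rw [hp]
        _ = 0 := mul_zero b
    rw [hb]; exact A.zero_mem
  · have heval : ∑ i ∈ Finset.range (n + 1), algebraMap A B (p.coeff i) * b ^ i = 0 := by
      rw [← Polynomial.eval₂_eq_sum_range]; exact hp
    rw [Finset.sum_range_succ] at heval
    have hcn : p.coeff n = 1 := hmonic.coeff_natDegree
    rw [hcn, map_one, one_mul] at heval
    have hbn : b ^ n = -∑ i ∈ Finset.range n, algebraMap A B (p.coeff i) * b ^ i :=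
      eq_neg_of_add_eq_zero_left (by linear_combination heval)
    have key : b = -∑ i ∈ Finset.range n,
        algebraMap A B (p.coeff i) * (a : B) ^ (n - 1 - i) := by
      have h1 : b = (a : B) ^ (n - 1) * b ^ n := by
        calc b = ((a : B) * b) ^ (n - 1) * b := by rw [hab, one_pow, one_mul]
          _ = (a : B) ^ (n - 1) * (b ^ (n - 1) * b) := by rw [mul_pow]; ring
          _ = (a : B) ^ (n - 1) * b ^ n := by rw [← pow_succ, Nat.sub_add_cancel hpos]
      rw [h1, hbn, mul_neg, neg_inj, Finset.mul_sum]
      refine Finset.sum_congr rfl fun i hi => ?_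
      have hi' : i < n := Finset.mem_range.mp hi
      calc (a : B) ^ (n - 1) * (algebraMap A B (p.coeff i) * b ^ i)
          = algebraMap A B (p.coeff i) * (((a : B) ^ (n - 1 - i) * (a : B) ^ i) * b ^ i) := by
            rw [← pow_add, Nat.sub_add_cancel (by omega)]; ring
        _ = algebraMap A B (p.coeff i) * ((a : B) ^ (n - 1 - i) * ((a : B) * b) ^ i) := by
            rw [mul_pow]; ring
        _ = algebraMap A B (p.coeff i) * (a : B) ^ (n - 1 - i) := by
            rw [hab, one_pow, mul_one]
    rw [key]
    exact A.neg_mem (Subring.sum_mem _ fun i _ =>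
      A.mul_mem (SetLike.coe_mem _) (A.pow_mem (SetLike.coe_mem a) _))

lemma isUnit_iff_of_finite {B : Type*} [CommRing B] (A : Subring B)
    [Module.Finite A B] (a : A) : IsUnit (a : B) ↔ IsUnit a := by
  constructor
  · rintro ⟨u, hu⟩
    obtain ⟨b, hb1, hb2⟩ : ∃ b : B, (a : B) * b = 1 ∧ b * (a : B) = 1 := by
      refine ⟨u.inv, ?_, ?_⟩ <;> rw [← hu] <;> [exact u.val_inv; exact u.inv_val]
    have hbA : b ∈ A := inv_mem_of_finite A a b hb1
    exact IsUnit.of_mul_eq_one (a := a) ⟨b, hbA⟩ (Subtype.ext hb1)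
  · exact fun h => h.map A.subtype

theorem unit_and_jacobson_of_finite {B : Type*} [CommRing B] (A : Subring B)
    [Module.Finite A B] (a : A) :
    (IsUnit (a : B) ↔ IsUnit a) ∧
    ((∀ y : B, IsUnit (1 + (a : B) * y)) ↔ (∀ y : A, IsUnit (1 + a * y))) := by
  refine ⟨isUnit_iff_of_finite A a, ?_, ?_⟩
  · intro h y
    have := h (y : B)
    rw [show (1 : B) + (a : B) * (y : B) = ((1 + a * y : A) : B) by push_cast; ring] at this
    exact (isUnit_iff_of_finite A (1 + a * y)).mp this
  · intro h y
    -- a ∈ jacobson ⊥ of A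
    have haJ : a ∈ Ideal.jacobson (⊥ : Ideal A) := by
      rw [Ideal.mem_jacobson_bot]
      intro z
      have := h z
      rwa [add_comm] at this
    set u : B := 1 + (a : B) * y with hu
    set N : Submodule A B := (Ideal.span {u}).restrictScalars A with hN
    suffices htop : Ideal.span {u} = ⊤ by
      rw [Ideal.span_singleton_eq_top] at htop
      exact htop
    have hub : ∀ b : B, u * b ∈ N := fun b =>
      (Ideal.span {u}).mul_mem_right b (Ideal.subset_span rfl)
    have hQ : ∀ x : B ⧸ N, ∃ m : B ⧸ N, x = a • m := by
      intro x
      obtain ⟨b, rfl⟩ := Submodule.Quotient.mk_surjective N x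
      refine ⟨Submodule.Quotient.mk (-(y * b)), ?_⟩
      rw [← Submodule.Quotient.mk_smul]
      rw [Submodule.Quotient.eq]
      have hsmul : (a : A) • (-(y * b)) = -((a : B) * (y * b)) := by
        rw [smul_neg]; congr 1
      rw [hsmul]
      have : b - -((a : B) * (y * b)) = u * b := by rw [hu]; ring
      rw [this]
      exact hub b
    have hbot : (⊤ : Submodule A (B ⧸ N)) = ⊥ := by
      refine Submodule.eq_bot_of_le_smul_of_le_jacobson_bot (Ideal.span {a}) ⊤
        Module.Finite.fg_top ?_ ?_
      · intro x _
        obtain ⟨m, rfl⟩ := hQ x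
        exact Submodule.smul_mem_smul (Ideal.subset_span rfl) trivial
      · rwa [Ideal.span_le, Set.singleton_subset_iff]
    have : ∀ b : B, b ∈ N := by
      intro b
      have : Submodule.Quotient.mk (p := N) b = 0 := by
        have := hbot ▸ (Submodule.mem_top : Submodule.Quotient.mk (p := N) b ∈ ⊤)
        simpa using this
      rwa [Submodule.Quotient.mk_eq_zero] at this
    exact Ideal.eq_top_iff_one _ |>.mpr (this 1)
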